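/- Let J be a nonempty category in which every pair of objects a, b admits an object c together with morphisms c → a and c → b (for instance, any cofiltered category), and let F : J ⥤ Top be a functor to topological spaces. Let M be a topological space equipped with a cone over F, i.e., continuous maps φ_j : M → F(j) natural in j, and let φ̃ : M → lim F be the induced continuous map into the limit. If every φ_j has dense range, then φ̃ has dense range. -/

import Mathlib

open CategoryTheory Limits

universe u

open Filter Topology in
lemma dense_image_in_limit_aux {J : Type u} [SmallCategory J] [Nonempty J]
    (hJ : ∀ a b : J, ∃ (c : J) (_ : c ⟶ a) (_ : c ⟶ b), True)
    (F : J ⥤ TopCat.{u}) (cn : Cone F)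
    (hdense : ∀ j : J, DenseRange ⇑(cn.π.app j)) :
    DenseRange ⇑((TopCat.limitConeIsLimit.{u, u} F).lift cn) := by
  set L := TopCat.limitCone.{u, u} F with hL
  set ℓ := (TopCat.limitConeIsLimit.{u, u} F).lift cn with hℓ
  intro x
  rw [mem_closure_iff_nhds]
  intro t ht
  -- the topology on L.pt is the infimum of the induced topologies
  have hnhds : 𝓝 x = ⨅ j : J, Filter.comap (L.π.app j) (𝓝 (L.π.app j x)) := by
    have key : ∀ y : { u : ∀ j : J, F.obj j | ∀ {i j : J} (f : i ⟶ j), F.map f (u i) = u j },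
        𝓝 y = ⨅ j : J, Filter.comap (fun z : { u : ∀ j : J, F.obj j |
          ∀ {i j : J} (f : i ⟶ j), F.map f (u i) = u j } => z.val j) (𝓝 (y.val j)) := by
      intro y
      rw [nhds_subtype, nhds_pi, Filter.pi, Filter.comap_iInf]
      simp only [Filter.comap_comap]
      rfl
    exact key x
  have hdir : Directed (· ≥ ·) fun j : J => Filter.comap (L.π.app j) (𝓝 (L.π.app j x)) := by
    intro a b
    obtain ⟨c, f, g, -⟩ := hJ a b
    refine ⟨c, ?_, ?_⟩
    · show Filter.comap (⇑(L.π.app c)) (𝓝 (L.π.app c x)) ≤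
        Filter.comap (⇑(L.π.app a)) (𝓝 (L.π.app a x))
      have hw : ⇑(L.π.app a) = ⇑(F.map f) ∘ ⇑(L.π.app c) := by
        rw [← L.w f]; rfl
      rw [hw]
      calc Filter.comap (⇑(L.π.app c)) (𝓝 (L.π.app c x))
          ≤ Filter.comap (⇑(L.π.app c)) (Filter.comap (⇑(F.map f))
              (𝓝 (F.map f (L.π.app c x)))) :=
            Filter.comap_mono ((F.map f).hom.continuous.tendsto _).le_comap
        _ = Filter.comap (⇑(F.map f) ∘ ⇑(L.π.app c)) (𝓝 ((⇑(F.map f) ∘ ⇑(L.π.app c)) x)) := by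
            rw [Filter.comap_comap]; rfl
    · show Filter.comap (⇑(L.π.app c)) (𝓝 (L.π.app c x)) ≤
        Filter.comap (⇑(L.π.app b)) (𝓝 (L.π.app b x))
      have hw : ⇑(L.π.app b) = ⇑(F.map g) ∘ ⇑(L.π.app c) := by
        rw [← L.w g]; rfl
      rw [hw]
      calc Filter.comap (⇑(L.π.app c)) (𝓝 (L.π.app c x))
          ≤ Filter.comap (⇑(L.π.app c)) (Filter.comap (⇑(F.map g))
              (𝓝 (F.map g (L.π.app c x)))) :=
            Filter.comap_mono ((F.map g).hom.continuous.tendsto _).le_comap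
        _ = Filter.comap (⇑(F.map g) ∘ ⇑(L.π.app c)) (𝓝 ((⇑(F.map g) ∘ ⇑(L.π.app c)) x)) := by
            rw [Filter.comap_comap]; rfl
  rw [hnhds] at ht
  replace ht := (Filter.mem_iInf_of_directed hdir t).mp ht
  obtain ⟨j, s, hs, hst⟩ := ht
  -- use density of the leg at j
  obtain ⟨m, hm⟩ := (hdense j).exists_mem_open isOpen_interior
    ⟨_, mem_interior_iff_mem_nhds.mpr hs⟩
  refine ⟨ℓ m, hst ?_, ⟨m, rfl⟩⟩
  have hfac : L.π.app j (ℓ m) = cn.π.app j m := by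
    have := (TopCat.limitConeIsLimit.{u, u} F).fac cn j
    calc L.π.app j (ℓ m) = (ℓ ≫ L.π.app j) m := rfl
      _ = cn.π.app j m := by rw [this]
  show ℓ m ∈ (L.π.app j) ⁻¹' s
  simp only [Set.mem_preimage, hfac]
  exact interior_subset hm

theorem dense_image_in_limit {J : Type u} [SmallCategory J] [Nonempty J]
    (hJ : ∀ a b : J, ∃ (c : J) (_ : c ⟶ a) (_ : c ⟶ b), True)
    (F : J ⥤ TopCat.{u}) (cn : Cone F)
    (hdense : ∀ j : J, DenseRange ⇑(cn.π.app j)) :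
    DenseRange ⇑(limit.lift F cn) := by
  have key := dense_image_in_limit_aux hJ F cn hdense
  set e := TopCat.homeoOfIso
    (limit.isoLimitCone ⟨TopCat.limitCone.{u, u} F, TopCat.limitConeIsLimit.{u, u} F⟩)
  have hcomp : ⇑((TopCat.limitConeIsLimit.{u, u} F).lift cn) = ⇑e ∘ ⇑(limit.lift F cn) := by
    have : limit.lift F cn ≫
        (limit.isoLimitCone ⟨TopCat.limitCone.{u, u} F, TopCat.limitConeIsLimit.{u, u} F⟩).hom
        = (TopCat.limitConeIsLimit.{u, u} F).lift cn := by
      apply (TopCat.limitConeIsLimit.{u, u} F).hom_ext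
      intro j
      simp [limit.isoLimitCone]
    rw [← this]; rfl
  have h2 : DenseRange (⇑e.symm ∘ (⇑e ∘ ⇑(limit.lift F cn))) := by
    exact (e.symm.surjective.denseRange).comp (hcomp ▸ key) e.symm.continuous
  have : ⇑e.symm ∘ (⇑e ∘ ⇑(limit.lift F cn)) = ⇑(limit.lift F cn) := by
    funext y; simp
  rwa [this] at h2
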